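/- Let p ≥ 1, let I₀ and I₁ be disjoint finite index sets, and let x^(i) ∈ ℝ^p for each i ∈ I₀ ∪ I₁. For every point x̄ ∈ ℝ^p the following are equivalent: (1) for every a ∈ ℝ^p and b ∈ ℝ such that ⟪a, x^(i)⟫ − b ≤ 0 for all i ∈ I₀ and ⟪a, x^(i)⟫ − b ≥ 0 for all i ∈ I₁, one has ⟪a, x̄⟫ − b ≥ 0; (2) there exists u : I₀ ∪ I₁ → ℝ with u_i ≥ 0 for all i, such that Σ_{i∈I₁} u_i − Σ_{i∈I₀} u_i = 1 and Σ_{i∈I₁} u_i • x^(i) − Σ_{i∈I₀} u_i • x^(i) = x̄. (This is the characterization of the 'Yes' region induced by factual queries.) -/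

import Mathlib

open Finset

open scoped InnerProductSpace


section Carath
variable {E : Type*} [AddCommGroup E] [Module ℝ E] {ι : Type*} [DecidableEq ι]

lemma cone_carath (g : ι → E) (s : Finset ι) (v : E)
    (h : ∃ u : ι → ℝ, (∀ i, 0 ≤ u i) ∧ ∑ i ∈ s, u i • g i = v) :
    ∃ t ⊆ s, LinearIndependent ℝ (fun i : t => g i) ∧
      ∃ u : ι → ℝ, (∀ i, 0 ≤ u i) ∧ ∑ i ∈ t, u i • g i = v := by
  classical
  induction s using Finset.strongInduction with
  | _ s ih =>
  obtain ⟨u, hu, hsum⟩ := h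
  by_cases hli : LinearIndependent ℝ (fun i : s => g i)
  · exact ⟨s, subset_rfl, hli, u, hu, hsum⟩
  rw [Fintype.not_linearIndependent_iff] at hli
  obtain ⟨d, hd0, j, hj⟩ := hli
  set d' : ι → ℝ := fun i => if h : i ∈ s then d ⟨i, h⟩ else 0 with hd'
  have hd'sum : ∑ i ∈ s, d' i • g i = 0 := by
    rw [← Finset.sum_attach s fun i => d' i • g i, ← hd0, Finset.univ_eq_attach]
    refine Finset.sum_congr rfl fun i _ => ?_
    simp [hd', i.2]
  have key : ∀ e : ι → ℝ, (∑ i ∈ s, e i • g i = 0) → (∃ i ∈ s, 0 < e i) →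
      ∃ t ⊆ s, LinearIndependent ℝ (fun i : t => g i) ∧
        ∃ u : ι → ℝ, (∀ i, 0 ≤ u i) ∧ ∑ i ∈ t, u i • g i = v := by
    intro e hesum ⟨jj, hjs, hjpos⟩
    obtain ⟨i₀, hi₀T, hmin⟩ := (s.filter fun i => 0 < e i).exists_min_image
      (fun i => u i / e i) ⟨jj, Finset.mem_filter.2 ⟨hjs, hjpos⟩⟩
    obtain ⟨hi₀s, hi₀pos⟩ := Finset.mem_filter.1 hi₀T
    set lam : ℝ := u i₀ / e i₀ with hlam
    have hlam0 : 0 ≤ lam := div_nonneg (hu i₀) hi₀pos.le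
    set u' : ι → ℝ := fun i => if i ∈ s then u i - lam * e i else 0 with hu'
    have hu'0 : ∀ i, 0 ≤ u' i := by
      intro i
      simp only [hu']
      split
      · rename_i his
        by_cases hei : 0 < e i
        · have := hmin i (Finset.mem_filter.2 ⟨his, hei⟩)
          have : lam * e i ≤ u i := by
            rw [← le_div_iff₀ hei]; exact this
          linarith
        · push_neg at hei
          nlinarith [hu i, mul_nonpos_of_nonneg_of_nonpos hlam0 hei]
      · exact le_rfl
    have hu'i₀ : u' i₀ = 0 := by
      simp only [hu', if_pos hi₀s, hlam]
      field_simp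
      ring
    have hsum' : ∑ i ∈ s.erase i₀, u' i • g i = v := by
      rw [Finset.sum_erase _ (by rw [hu'i₀, zero_smul])]
      have : ∑ i ∈ s, u' i • g i
          = ∑ i ∈ s, u i • g i - lam • ∑ i ∈ s, e i • g i := by
        rw [Finset.smul_sum, ← Finset.sum_sub_distrib]
        refine Finset.sum_congr rfl fun i his => ?_
        simp [hu', if_pos his, sub_smul, smul_smul]
      rw [this, hesum, hsum, smul_zero, sub_zero]
    obtain ⟨t, hts, hind, w⟩ := ih (s.erase i₀) (Finset.erase_ssubset hi₀s) ⟨u', hu'0, hsum'⟩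
    exact ⟨t, hts.trans (Finset.erase_subset _ _), hind, w⟩
  rcases lt_or_gt_of_ne hj with hneg | hpos
  · refine key (-d') ?_ ⟨j, j.2, ?_⟩
    · simp only [Pi.neg_apply, neg_smul, Finset.sum_neg_distrib, hd'sum, neg_zero]
    · simp [hd', j.2]; linarith
  · exact key d' hd'sum ⟨j, j.2, by simp [hd', j.2]; exact hpos⟩

end Carath

section Closed
variable {E : Type*} [NormedAddCommGroup E] [NormedSpace ℝ E] {ι : Type*} [DecidableEq ι]

lemma cone_indep_closed (g : ι → E) (t : Finset ι)
    (hli : LinearIndependent ℝ (fun i : t => g i)) :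
    IsClosed {v : E | ∃ u : ι → ℝ, (∀ i, 0 ≤ u i) ∧ ∑ i ∈ t, u i • g i = v} := by
  classical
  set T : (↥t → ℝ) →ₗ[ℝ] E :=
    { toFun := fun c => ∑ i : t, c i • g i
      map_add' := by intro c c'; simp [add_smul, Finset.sum_add_distrib]
      map_smul' := by intro r c; simp [smul_smul, Finset.smul_sum] } with hT
  have hker : LinearMap.ker T = ⊥ := by
    rw [LinearMap.ker_eq_bot']
    intro c hc
    have := Fintype.linearIndependent_iff.1 hli c hc
    funext i; exact this i
  have himg : {v : E | ∃ u : ι → ℝ, (∀ i, 0 ≤ u i) ∧ ∑ i ∈ t, u i • g i = v}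
      = T '' {c | ∀ i, 0 ≤ c i} := by
    ext v
    constructor
    · rintro ⟨u, hu, rfl⟩
      refine ⟨fun i => u i, fun i => hu i, ?_⟩
      simp only [hT, LinearMap.coe_mk, AddHom.coe_mk]
      change ∑ i : t, u i • g i = ∑ i ∈ t, u i • g i
      rw [Finset.univ_eq_attach, Finset.sum_attach t fun i => u i • g i]
    · rintro ⟨c, hc, rfl⟩
      refine ⟨fun i => if h : i ∈ t then c ⟨i, h⟩ else 0,
        fun i => by dsimp; split <;> [exact hc _; exact le_rfl], ?_⟩
      simp only [hT, LinearMap.coe_mk, AddHom.coe_mk]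
      change _ = ∑ i : t, c i • g i
      rw [Finset.univ_eq_attach, ← Finset.sum_attach t
        fun i => (if h : i ∈ t then c ⟨i, h⟩ else 0) • g i]
      refine Finset.sum_congr rfl fun i _ => ?_
      simp [i.2]
  rw [himg]
  refine (LinearMap.isClosedEmbedding_of_injective hker).isClosedMap _ ?_
  have : {c : ↥t → ℝ | ∀ i, 0 ≤ c i} = ⋂ i, {c | 0 ≤ c i} := by
    ext c; simp [Set.mem_iInter]
  rw [this]
  exact isClosed_iInter fun i => isClosed_le continuous_const (continuous_apply i)

lemma cone_fg_closed (g : ι → E) (s : Finset ι) :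
    IsClosed {v : E | ∃ u : ι → ℝ, (∀ i, 0 ≤ u i) ∧ ∑ i ∈ s, u i • g i = v} := by
  classical
  have heq : {v : E | ∃ u : ι → ℝ, (∀ i, 0 ≤ u i) ∧ ∑ i ∈ s, u i • g i = v}
      = ⋃ t ∈ (s.powerset : Finset (Finset ι)),
          {v : E | LinearIndependent ℝ (fun i : t => g i) ∧
            ∃ u : ι → ℝ, (∀ i, 0 ≤ u i) ∧ ∑ i ∈ t, u i • g i = v} := by
    ext v
    simp only [Set.mem_iUnion, Set.mem_setOf_eq, Finset.mem_powerset]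
    constructor
    · rintro h
      obtain ⟨t, hts, hind, u, hu, hsum⟩ := cone_carath g s v h
      exact ⟨t, hts, hind, u, hu, hsum⟩
    · rintro ⟨t, hts, _, u, hu, hsum⟩
      refine ⟨fun i => if i ∈ t then u i else 0, fun i => by dsimp; split <;> [exact hu i; exact le_rfl], ?_⟩
      calc ∑ i ∈ s, (if i ∈ t then u i else 0) • g i
          = ∑ i ∈ t, (if i ∈ t then u i else 0) • g i :=
            (Finset.sum_subset hts fun i _ hit => by simp [hit]).symm
        _ = ∑ i ∈ t, u i • g i := Finset.sum_congr rfl fun i hit => by simp [hit]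
        _ = v := hsum
  rw [heq]
  refine Set.Finite.isClosed_biUnion (s.powerset.finite_toSet) fun t _ => ?_
  by_cases hind : LinearIndependent ℝ (fun i : t => g i)
  · simpa [hind] using cone_indep_closed g t hind
  · convert isClosed_empty
    ext v; simp [hind]

end Closed

lemma farkas {E : Type*} [NormedAddCommGroup E] [InnerProductSpace ℝ E] [CompleteSpace E]
    {ι : Type*} [DecidableEq ι] (g : ι → E) (s : Finset ι) (v : E) :
    (∀ w : E, (∀ i ∈ s, 0 ≤ ⟪g i, w⟫_ℝ) → 0 ≤ ⟪v, w⟫_ℝ) ↔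
      ∃ u : ι → ℝ, (∀ i, 0 ≤ u i) ∧ ∑ i ∈ s, u i • g i = v := by
  classical
  set K : ConvexCone ℝ E :=
    { carrier := {v : E | ∃ u : ι → ℝ, (∀ i, 0 ≤ u i) ∧ ∑ i ∈ s, u i • g i = v}
      smul_mem' := by
        rintro c hc w ⟨u, hu, rfl⟩
        exact ⟨fun i => c * u i, fun i => mul_nonneg hc.le (hu i),
          by rw [Finset.smul_sum]; exact Finset.sum_congr rfl fun i _ => (smul_smul c (u i) (g i)).symm⟩
      add_mem' := by
        rintro w ⟨u, hu, rfl⟩ w' ⟨u', hu', rfl⟩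
        exact ⟨fun i => u i + u' i, fun i => add_nonneg (hu i) (hu' i),
          by rw [← Finset.sum_add_distrib]; exact Finset.sum_congr rfl fun i _ => (add_smul _ _ _)⟩ } with hK
  have hne : (K : Set E).Nonempty := ⟨0, ⟨0, fun i => le_rfl, by simp⟩⟩
  have hcl : IsClosed (K : Set E) := cone_fg_closed g s
  have hdd : ∀ x₀ : E, x₀ ∉ (K : Set E) →
      ∃ y, (∀ x ∈ (K : Set E), 0 ≤ ⟪x, y⟫_ℝ) ∧ ⟪x₀, y⟫_ℝ < 0 := by
    intro x₀ hx₀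
    have hpt : K.Pointed := ⟨0, fun i => le_rfl, by simp⟩
    let C : ProperCone ℝ E := { toSubmodule := K.toPointedCone hpt, isClosed' := hcl }
    exact C.hyperplane_separation' hx₀
  have hdual : ∀ w : E, (∀ z ∈ (K : Set E), 0 ≤ ⟪z, w⟫_ℝ) ↔ ∀ i ∈ s, 0 ≤ ⟪g i, w⟫_ℝ := by
    intro w
    constructor
    · intro hw i his
      exact hw (g i) ⟨fun j => if j = i then 1 else 0,
        fun j => by dsimp; split <;> norm_num,
        by simp only [ite_smul, one_smul, zero_smul]
           rw [Finset.sum_ite_eq' s i g]; simp [his]⟩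
    · rintro hw z ⟨u, hu, rfl⟩
      rw [sum_inner]
      refine Finset.sum_nonneg fun i his => ?_
      rw [real_inner_smul_left]
      exact mul_nonneg (hu i) (hw i his)
  constructor
  · intro h1
    by_contra hv
    obtain ⟨y, hy, hvy⟩ := hdd v hv
    have := h1 y ((hdual y).1 hy)
    linarith
  · rintro hv w hw
    have hvK : v ∈ K := hv
    exact (hdual w).2 hw v hvK

/-- The 'Yes' region induced by factual queries: a point is classified 'Yes' by every
consistent linear classifier iff it admits the dual multiplier representation. -/
theorem yes_region_characterization {p : ℕ} (hp : 1 ≤ p) {ι : Type*} [DecidableEq ι]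
    (I₀ I₁ : Finset ι) (hdisj : Disjoint I₀ I₁)
    (x : ι → (Fin p → ℝ)) (xbar : Fin p → ℝ) :
    ((∀ (a : Fin p → ℝ) (b : ℝ),
        (∀ i ∈ I₀, (∑ k, a k * x i k) - b ≤ 0) →
        (∀ i ∈ I₁, (∑ k, a k * x i k) - b ≥ 0) →
        (∑ k, a k * xbar k) - b ≥ 0)
      ↔ (∃ u : ι → ℝ, (∀ i ∈ I₀ ∪ I₁, 0 ≤ u i) ∧
          (∑ i ∈ I₁, u i) - (∑ i ∈ I₀, u i) = 1 ∧
          (∑ i ∈ I₁, u i • x i) - (∑ i ∈ I₀, u i • x i) = xbar)) := by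
  classical
  set E := EuclideanSpace ℝ (Option (Fin p)) with hE
  set L := WithLp.linearEquiv 2 ℝ (Option (Fin p) → ℝ) with hL
  set P : ((Fin p → ℝ) × ℝ) →ₗ[ℝ] (Option (Fin p) → ℝ) :=
    { toFun := fun z o => o.elim z.2 z.1
      map_add' := by intro z z'; funext o; cases o <;> rfl
      map_smul' := by intro r z; funext o; cases o <;> rfl } with hP
  set EMB : ((Fin p → ℝ) × ℝ) →ₗ[ℝ] E := L.symm.toLinearMap ∘ₗ P with hEMB
  have hEMBinj : Function.Injective EMB := by
    intro z z' hzz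
    have := L.symm.injective hzz
    have h1 := congrFun this none
    have h2 := funext fun k => congrFun this (some k)
    exact Prod.ext h2 h1
  have hinner : ∀ (v : Fin p → ℝ) (c : ℝ) (v' : Fin p → ℝ) (c' : ℝ),
      ⟪EMB (v, c), EMB (v', c')⟫_ℝ = c * c' + ∑ k, v k * v' k := by
    intro v c v' c'
    rw [PiLp.inner_apply, Fintype.sum_option]
    congr 1
    · simp only [RCLike.inner_apply, conj_trivial]; exact mul_comm _ _
    · refine Finset.sum_congr rfl fun k _ => ?_
      simp only [RCLike.inner_apply, conj_trivial]; exact mul_comm _ _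
  have hsurj : ∀ w : E, ∃ v c, w = EMB (v, c) := by
    intro w
    refine ⟨fun k => L w (some k), L w none, ?_⟩
    apply L.injective
    rw [hEMB]
    simp only [LinearMap.coe_comp, Function.comp_apply, LinearEquiv.coe_coe,
      LinearEquiv.apply_symm_apply]
    funext o; cases o <;> rfl
  set g : ι → E := fun i => if i ∈ I₁ then EMB (x i, 1) else -EMB (x i, 1) with hg
  have hsplit : ∀ u : ι → ℝ, ∑ i ∈ I₀ ∪ I₁, u i • g i
      = ∑ i ∈ I₁, u i • EMB (x i, 1) - ∑ i ∈ I₀, u i • EMB (x i, 1) := by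
    intro u
    rw [Finset.sum_union hdisj]
    rw [Finset.sum_congr rfl (fun i hi => show u i • g i = -(u i • EMB (x i, 1)) by
      simp [hg, Finset.disjoint_left.1 hdisj hi])]
    rw [Finset.sum_congr rfl (fun i hi => show u i • g i = u i • EMB (x i, 1) by
      simp [hg, hi])]
    rw [Finset.sum_neg_distrib]
    abel
  have hembsum : ∀ (u : ι → ℝ) (s : Finset ι),
      ∑ i ∈ s, u i • EMB (x i, 1) = EMB (∑ i ∈ s, u i • x i, ∑ i ∈ s, u i) := by
    intro u s
    rw [show ∑ i ∈ s, u i • EMB (x i, 1) = ∑ i ∈ s, EMB (u i • (x i, 1)) from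
      Finset.sum_congr rfl fun i _ => (map_smul EMB _ _).symm, ← map_sum]
    congr 1
    refine Prod.ext ?_ ?_
    · rw [Prod.fst_sum]; simp
    · rw [Prod.snd_sum]; simp
  -- step 1: LHS ↔ dual condition
  have step1 : (∀ (a : Fin p → ℝ) (b : ℝ),
        (∀ i ∈ I₀, (∑ k, a k * x i k) - b ≤ 0) →
        (∀ i ∈ I₁, (∑ k, a k * x i k) - b ≥ 0) →
        (∑ k, a k * xbar k) - b ≥ 0)
      ↔ (∀ w : E, (∀ i ∈ I₀ ∪ I₁, 0 ≤ ⟪g i, w⟫_ℝ) → 0 ≤ ⟪EMB (xbar, 1), w⟫_ℝ) := by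
    constructor
    · intro h w hw
      obtain ⟨a, c, rfl⟩ := hsurj w
      have key : ∀ v : Fin p → ℝ, ⟪EMB (v, 1), EMB (a, c)⟫_ℝ = (∑ k, a k * v k) - (-c) := by
        intro v
        rw [hinner]
        rw [show ∑ k, v k * a k = ∑ k, a k * v k from
          Finset.sum_congr rfl fun k _ => mul_comm _ _]
        ring
      have key2 : ∀ v : Fin p → ℝ, ⟪EMB (v, 1), EMB (a, c)⟫_ℝ = (∑ k, v k * a k) + c := by
        intro v; rw [hinner]; ring
      have := h a (-c)
        (fun i hi => by
          have h0 := hw i (Finset.mem_union_left _ hi)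
          rw [show g i = -EMB (x i, 1) from by simp [hg, Finset.disjoint_left.1 hdisj hi],
            inner_neg_left] at h0
          have := key (x i)
          linarith)
        (fun i hi => by
          have h0 := hw i (Finset.mem_union_right _ hi)
          rw [show g i = EMB (x i, 1) from by simp [hg, hi]] at h0
          have := key (x i)
          linarith)
      have := key xbar
      linarith
    · intro h a b
      intro h0 h1
      have h2 := h (EMB (a, -b)) (fun i hi => by
        rcases Finset.mem_union.1 hi with hi0 | hi1
        · rw [show g i = -EMB (x i, 1) from by simp [hg, Finset.disjoint_left.1 hdisj hi0],
            inner_neg_left, real_inner_comm, hinner]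
          have := h0 i hi0
          have hh : (-b) * 1 + ∑ k, a k * x i k = (∑ k, a k * x i k) - b := by ring
          rw [hh]
          linarith
        · rw [show g i = EMB (x i, 1) from by simp [hg, hi1], real_inner_comm, hinner]
          have := h1 i hi1
          have hh : (-b) * 1 + ∑ k, a k * x i k = (∑ k, a k * x i k) - b := by ring
          rw [hh]
          linarith)
      rw [real_inner_comm, hinner] at h2
      have hh : (-b) * 1 + ∑ k, a k * xbar k = (∑ k, a k * xbar k) - b := by ring
      rw [hh] at h2
      linarith
  -- step 2: Farkas
  rw [step1, farkas g (I₀ ∪ I₁) (EMB (xbar, 1))]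
  constructor
  · rintro ⟨u, hu, hsum⟩
    rw [hsplit, hembsum, hembsum, ← map_sub] at hsum
    have := hEMBinj hsum
    have hfst := congrArg Prod.fst this
    have hsnd := congrArg Prod.snd this
    simp only [Prod.fst_sub, Prod.snd_sub] at hfst hsnd
    exact ⟨u, fun i _ => hu i, hsnd, hfst⟩
  · rintro ⟨u, hu, hcoef, hvec⟩
    set u' : ι → ℝ := fun i => if i ∈ I₀ ∪ I₁ then u i else 0 with hu'
    have hcong : ∀ s : Finset ι, s ⊆ I₀ ∪ I₁ →
        (∑ i ∈ s, u' i • x i = ∑ i ∈ s, u i • x i) ∧ (∑ i ∈ s, u' i = ∑ i ∈ s, u i) := by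
      intro s hs
      constructor <;> refine Finset.sum_congr rfl fun i hi => ?_ <;>
        · simp only [hu']; rw [if_pos (hs hi)]
    refine ⟨u', fun i => by simp only [hu']; split <;> [exact hu _ ‹_›; exact le_rfl], ?_⟩
    rw [hsplit, hembsum, hembsum, ← map_sub]
    congr 1
    refine Prod.ext ?_ ?_
    · simp only [Prod.fst_sub]
      rw [(hcong I₁ Finset.subset_union_right).1, (hcong I₀ Finset.subset_union_left).1]
      exact hvec
    · simp only [Prod.snd_sub]
      rw [(hcong I₁ Finset.subset_union_right).2, (hcong I₀ Finset.subset_union_left).2]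
      exact hcoef
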